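/- Let k be a field, A a finitely generated associative unital k-algebra, and n ≥ 1. Then there exist a finitely generated commutative k-algebra R and a k-algebra homomorphism rep : A → Mat_n(R) with the following universal property: for every commutative k-algebra B and every k-algebra homomorphism ρ : A → Mat_n(B), there exists a unique k-algebra homomorphism ψ : R → B such that applying ψ to each matrix entry of rep(a) yields ρ(a) for every a ∈ A. -/

import Mathlib

/-- For a finitely generated `k`-algebra `A` and `n ≥ 1`, the functor
`B ↦ Hom_{k-alg}(A, Matₙ(B))` on commutative `k`-algebras is representable by a
finitely generated commutative `k`-algebra `R = k[Repₙ(A)]`, together with the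
universal representation `rep : A → Matₙ(R)`. -/
theorem rep_scheme_representable
    (k : Type) [Field k] (A : Type) [Ring A] [Algebra k A]
    (hA : Algebra.FiniteType k A) (n : ℕ) (hn : 1 ≤ n) :
    ∃ (R : Type) (_ : CommRing R) (_ : Algebra k R),
      Algebra.FiniteType k R ∧
      ∃ rep : A →ₐ[k] Matrix (Fin n) (Fin n) R,
        ∀ (B : Type) [CommRing B] [Algebra k B]
          (ρ : A →ₐ[k] Matrix (Fin n) (Fin n) B),
          ∃! ψ : R →ₐ[k] B, ∀ a : A, (rep a).map ψ = ρ a := by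
  classical
  obtain ⟨s, hs⟩ := hA.out
  let σ : Type := ↥s × Fin n × Fin n
  let R₀ : Type := MvPolynomial σ k
  let π : FreeAlgebra k ↥s →ₐ[k] A := FreeAlgebra.lift k (fun x => (x : A))
  have hπ : Function.Surjective π := by
    have h1 : Algebra.adjoin k (↑s : Set A) ≤ π.range := by
      apply Algebra.adjoin_le
      rintro a ha
      exact ⟨FreeAlgebra.ι k (⟨a, ha⟩ : ↥s), FreeAlgebra.lift_ι_apply _ _⟩
    intro a
    have h2 : a ∈ π.range := by
      rw [hs] at h1; exact h1 (by trivial)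
    exact h2
  let rep₀ : FreeAlgebra k ↥s →ₐ[k] Matrix (Fin n) (Fin n) R₀ :=
    FreeAlgebra.lift k (fun x => Matrix.of fun p q => MvPolynomial.X (x, p, q))
  have rep₀_ι : ∀ (x : ↥s) (p q : Fin n),
      rep₀ (FreeAlgebra.ι k x) p q = MvPolynomial.X (x, p, q) := by
    intro x p q
    simp [rep₀, FreeAlgebra.lift_ι_apply]
  let J : Ideal R₀ :=
    Ideal.span {y | ∃ x, π x = 0 ∧ ∃ p q, rep₀ x p q = y}
  let R : Type := R₀ ⧸ J
  let mk : R₀ →ₐ[k] R := Ideal.Quotient.mkₐ k J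
  have hmk : Function.Surjective mk := Ideal.Quotient.mkₐ_surjective k J
  let M : Matrix (Fin n) (Fin n) R₀ →ₐ[k] Matrix (Fin n) (Fin n) R :=
    AlgHom.mapMatrix mk
  have key : ∀ x y, π x = π y → M (rep₀ x) = M (rep₀ y) := by
    intro x y h
    have hz : π (x - y) = 0 := by rw [map_sub, h, sub_self]
    ext p q
    have hmem : rep₀ x p q - rep₀ y p q ∈ J := by
      have := Ideal.subset_span (show rep₀ (x - y) p q ∈
        {y | ∃ x, π x = 0 ∧ ∃ p q, rep₀ x p q = y} from ⟨x - y, hz, p, q, rfl⟩)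
      simpa [map_sub, Matrix.sub_apply] using this
    have heq : mk (rep₀ x p q) = mk (rep₀ y p q) := by
      simp only [mk, Ideal.Quotient.mkₐ_eq_mk]
      exact (Ideal.Quotient.mk_eq_mk_iff_sub_mem _ _).mpr hmem
    simpa [M, AlgHom.mapMatrix_apply, Matrix.map_apply] using heq
  let sec : A → FreeAlgebra k ↥s := Function.surjInv hπ
  have hsec : ∀ a, π (sec a) = a := fun a => Function.surjInv_eq hπ a
  let rep : A →ₐ[k] Matrix (Fin n) (Fin n) R :=
    { toFun := fun a => M (rep₀ (sec a))
      map_one' := by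
        show M (rep₀ (sec 1)) = 1
        rw [key (sec 1) 1 (by rw [hsec, map_one]), map_one, map_one]
      map_mul' := fun a b => by
        show M (rep₀ (sec (a * b))) = M (rep₀ (sec a)) * M (rep₀ (sec b))
        rw [key (sec (a * b)) (sec a * sec b)
          (by rw [hsec, map_mul, hsec, hsec]), map_mul, map_mul]
      map_zero' := by
        show M (rep₀ (sec 0)) = 0
        rw [key (sec 0) 0 (by rw [hsec, map_zero]), map_zero, map_zero]
      map_add' := fun a b => by
        show M (rep₀ (sec (a + b))) = M (rep₀ (sec a)) + M (rep₀ (sec b))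
        rw [key (sec (a + b)) (sec a + sec b)
          (by rw [hsec, map_add, hsec, hsec]), map_add, map_add]
      commutes' := fun c => by
        show M (rep₀ (sec (algebraMap k A c))) = algebraMap k _ c
        rw [key (sec (algebraMap k A c)) (algebraMap k _ c)
          (by rw [hsec, AlgHom.commutes]), AlgHom.commutes, AlgHom.commutes] }
  have rep_eq : ∀ x, rep (π x) = M (rep₀ x) := fun x => key (sec (π x)) x (hsec _)
  have rep_def : ∀ a, rep a = M (rep₀ (sec a)) := fun a => rfl
  refine ⟨R, inferInstance, inferInstance, ?_, rep, ?_⟩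
  · exact Algebra.FiniteType.of_surjective
      mk hmk
  · intro B _ _ ρ
    let ψ₀ : R₀ →ₐ[k] B :=
      MvPolynomial.aeval (fun v : σ => ρ (π (FreeAlgebra.ι k v.1)) v.2.1 v.2.2)
    have hψ₀X : ∀ v : σ, ψ₀ (MvPolynomial.X v) = ρ (π (FreeAlgebra.ι k v.1)) v.2.1 v.2.2 :=
      fun v => MvPolynomial.aeval_X _ v
    have keyB : ∀ x, (rep₀ x).map ψ₀ = ρ (π x) := by
      have hcomp : ψ₀.mapMatrix.comp rep₀ = ρ.comp π := by
        apply FreeAlgebra.hom_ext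
        funext v
        ext p q
        simp only [Function.comp_apply, AlgHom.comp_apply, AlgHom.mapMatrix_apply,
          Matrix.map_apply]
        rw [rep₀_ι, hψ₀X]
      intro x
      have := DFunLike.congr_fun hcomp x
      simpa [AlgHom.mapMatrix_apply] using this
    have hker : ∀ a ∈ J, ψ₀ a = 0 := by
      intro a ha
      refine (Ideal.span_le (I := RingHom.ker ψ₀.toRingHom)).mpr ?_ ha
      rintro y ⟨x, hx, p, q, rfl⟩
      have hm : (rep₀ x).map ψ₀ = 0 := by rw [keyB, hx, map_zero]
      have h0 : ((rep₀ x).map ψ₀) p q = 0 := by rw [hm]; rfl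
      simpa [RingHom.mem_ker, Matrix.map_apply] using h0
    let ψ : R →ₐ[k] B := Ideal.Quotient.liftₐ J ψ₀ hker
    have hψmk : ∀ r : R₀, ψ (mk r) = ψ₀ r := fun r => by
      show Ideal.Quotient.liftₐ J ψ₀ hker (Ideal.Quotient.mkₐ k J r) = ψ₀ r
      simp only [Ideal.Quotient.mkₐ_eq_mk, Ideal.Quotient.liftₐ_apply, Ideal.Quotient.lift_mk,
        AlgHom.coe_toRingHom]
      rfl
    refine ⟨ψ, ?_, ?_⟩
    · intro a
      have : (rep a).map ψ = (rep₀ (sec a)).map ψ₀ := by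
        rw [rep_def]
        ext p q
        simp [M, AlgHom.mapMatrix_apply, Matrix.map_apply, hψmk]
      rw [this, keyB, hsec]
    · intro ψ' hψ'
      apply Ideal.Quotient.algHom_ext
      apply MvPolynomial.algHom_ext
      intro v
      have h1 : mk (MvPolynomial.X v) = rep (π (FreeAlgebra.ι k v.1)) v.2.1 v.2.2 := by
        rw [rep_eq]
        simp [M, AlgHom.mapMatrix_apply, Matrix.map_apply, rep₀_ι]
      have h2 : ψ' (mk (MvPolynomial.X v)) = ρ (π (FreeAlgebra.ι k v.1)) v.2.1 v.2.2 := by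
        rw [h1]
        have := hψ' (π (FreeAlgebra.ι k v.1))
        calc ψ' (rep (π (FreeAlgebra.ι k v.1)) v.2.1 v.2.2)
            = ((rep (π (FreeAlgebra.ι k v.1))).map ψ') v.2.1 v.2.2 := rfl
          _ = ρ (π (FreeAlgebra.ι k v.1)) v.2.1 v.2.2 := by rw [this]
      simp only [AlgHom.comp_apply]
      rw [show (Ideal.Quotient.mkₐ k J) (MvPolynomial.X v) = mk (MvPolynomial.X v) from rfl,
        h2, hψmk, hψ₀X]
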